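/- Let H be a subgroup of G whose orientation states form an orthonormal basis of the frame space. For each character ψ : H →* ℂˣ define A_ψ := ∑_{h ∈ H} conj (ψ h) • Q h. Then: (i) each A_ψ is unitary, (A_ψ)ᴴ * A_ψ = 1 and A_ψ * (A_ψ)ᴴ = 1; and (ii) the family {A_ψ} satisfies the Knill–Laflamme conditions with respect to Π: for all characters ψ, ψ' of H, Π * (A_ψ)ᴴ * A_{ψ'} * Π = (if ψ = ψ' then (1 : ℂ) else 0) • Π. Hence {A_ψ} is a correctable error set for the non-ideal frame. -/

import Mathlib

open scoped Kronecker
open Matrix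

private lemma kvr_sum_kron {r s : ℕ} {ι : Type*} (t : Finset ι)
    (f : ι → Matrix (Fin r) (Fin r) ℂ) (B : Matrix (Fin s) (Fin s) ℂ) :
    (∑ i ∈ t, f i) ⊗ₖ B = ∑ i ∈ t, (f i) ⊗ₖ B := by
  ext ⟨i, a⟩ ⟨j, b⟩
  simp [Matrix.kroneckerMap_apply, Matrix.sum_apply, Finset.sum_mul]

private lemma kvr_vmv_mul_vmv {n : ℕ} (x y z w : Fin n → ℂ) :
    Matrix.vecMulVec x y * Matrix.vecMulVec z w = (y ⬝ᵥ z) • Matrix.vecMulVec x w := by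
  ext i j
  simp only [Matrix.mul_apply, Matrix.vecMulVec_apply, Matrix.smul_apply, dotProduct,
    Finset.sum_mul, smul_eq_mul]
  exact Finset.sum_congr rfl fun k _ => by ring

private lemma kvr_mul_vmv {n : ℕ} (M : Matrix (Fin n) (Fin n) ℂ) (x y : Fin n → ℂ) :
    M * Matrix.vecMulVec x y = Matrix.vecMulVec (M.mulVec x) y := by
  ext i j
  simp only [Matrix.mul_apply, Matrix.vecMulVec_apply, Matrix.mulVec, dotProduct,
    Finset.sum_mul]
  exact Finset.sum_congr rfl fun k _ => by ring

private lemma kvr_vmv_mul {n : ℕ} (M : Matrix (Fin n) (Fin n) ℂ) (x y : Fin n → ℂ) :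
    Matrix.vecMulVec x y * M = Matrix.vecMulVec x (Matrix.vecMul y M) := by
  ext i j
  simp only [Matrix.mul_apply, Matrix.vecMulVec_apply, Matrix.vecMul, dotProduct,
    Finset.mul_sum]
  exact Finset.sum_congr rfl fun k _ => by ring

private lemma kvr_vmv_herm {n : ℕ} (x : Fin n → ℂ) :
    (Matrix.vecMulVec x (star x))ᴴ = Matrix.vecMulVec x (star x) := by
  ext i j
  simp [Matrix.conjTranspose_apply, Matrix.vecMulVec_apply, mul_comm]

private lemma kvr_unit_mod {H : Type*} [Group H] [Fintype H] (ψ : H →* ℂˣ) (h : H) :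
    (ψ h : ℂ) * star ((ψ h : ℂ)) = 1 := by
  have hpow : (ψ h : ℂ) ^ Fintype.card H = 1 := by
    rw [← Units.val_pow_eq_pow_val, ← map_pow, pow_card_eq_one, _root_.map_one, Units.val_one]
  have hnorm : ‖(ψ h : ℂ)‖ = 1 :=
    Complex.norm_eq_one_of_pow_eq_one hpow Fintype.card_ne_zero
  have := Complex.mul_conj (ψ h : ℂ)
  rw [Complex.star_def, this, Complex.normSq_eq_norm_sq]
  rw [hnorm]; norm_num

private lemma kvr_char_sum {H : Type*} [CommGroup H] [Fintype H] (ψ ψ' : H →* ℂˣ)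
    (hne : ψ ≠ ψ') : ∑ h : H, (ψ h : ℂ) * star ((ψ' h : ℂ)) = 0 := by
  obtain ⟨h0, hh0⟩ : ∃ h0 : H, ψ h0 ≠ ψ' h0 := by
    by_contra hc
    push_neg at hc
    exact hne (MonoidHom.ext hc)
  set f : H → ℂ := fun h => (ψ h : ℂ) * star ((ψ' h : ℂ)) with hf
  have hmulf : ∀ a b : H, f (a * b) = f a * f b := by
    intro a b
    simp only [hf, _root_.map_mul, Units.val_mul, star_mul']
    ring
  have hre : ∑ h : H, f (h0 * h) = ∑ h : H, f h :=
    Fintype.sum_equiv (Equiv.mulLeft h0) _ _ (fun h => rfl)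
  have hkey : (f h0 - 1) * (∑ h : H, f h) = 0 := by
    have : ∑ h : H, f (h0 * h) = f h0 * ∑ h : H, f h := by
      rw [Finset.mul_sum]
      exact Finset.sum_congr rfl fun h _ => hmulf h0 h
    rw [sub_mul, one_mul, ← this, hre, sub_self]
  have hf0 : f h0 ≠ 1 := by
    intro hc
    have h1 : (ψ' h0 : ℂ) * star ((ψ' h0 : ℂ)) = 1 := kvr_unit_mod ψ' h0
    have hstar : star ((ψ' h0 : ℂ)) ≠ 0 := star_ne_zero.mpr (Units.ne_zero _)
    have : (ψ h0 : ℂ) = (ψ' h0 : ℂ) := mul_right_cancel₀ hstar (by simp only [hf] at hc; rw [hc, h1])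
    exact hh0 (Units.ext this)
  rcases mul_eq_zero.mp hkey with h | h
  · exact absurd (by linear_combination h) hf0
  · exact h

/-- **Correctable errors for a non-ideal frame.**  Let `H ≤ G` be a subgroup
whose orientation states form an orthonormal basis of the frame space.  For characters
`ψ, ψ'` of `H`, with `A_ψ := ∑_{h ∈ H} conj (ψ h) • Q h`:
(i) `A_ψ` is unitary, and (ii) the family `{A_ψ}` satisfies the Knill–Laflamme
conditions with respect to the gauge projector `Π`. -/
theorem subgroup_A_psi_unitary_and_correctable
    {G : Type*} [CommGroup G] [Fintype G] [DecidableEq G] {r s : ℕ}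
    (U_R : G → Matrix (Fin r) (Fin r) ℂ)
    (U_S : G → Matrix (Fin s) (Fin s) ℂ)
    (hR_mul : ∀ g h : G, U_R (g * h) = U_R g * U_R h)
    (hR_one : U_R 1 = 1)
    (hR_unitary : ∀ g : G, (U_R g)ᴴ * U_R g = 1)
    (hS_mul : ∀ g h : G, U_S (g * h) = U_S g * U_S h)
    (hS_one : U_S 1 = 1)
    (hS_unitary : ∀ g : G, (U_S g)ᴴ * U_S g = 1)
    (φ : G → (Fin r → ℂ))
    (hcov : ∀ g h : G, (U_R h).mulVec (φ g) = φ (h * g))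
    (Pg : Matrix (Fin r × Fin s) (Fin r × Fin s) ℂ)
    (hPg : Pg = (Fintype.card G : ℂ)⁻¹ • ∑ g : G, (U_R g) ⊗ₖ (U_S g))
    (Q : G → Matrix (Fin r × Fin s) (Fin r × Fin s) ℂ)
    (hQ : ∀ g : G, Q g = (Matrix.vecMulVec (φ g) (star (φ g))) ⊗ₖ
        (1 : Matrix (Fin s) (Fin s) ℂ))
    (H : Subgroup G) [Fintype H] [DecidableEq (H →* ℂˣ)]
    (horthH : ∀ h h' : H,
      (∑ i : Fin r, star (φ (h : G) i) * φ (h' : G) i) = if h = h' then 1 else 0)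
    (hcompleteH : ∑ h : H, Matrix.vecMulVec (φ (h : G)) (star (φ (h : G)))
        = (1 : Matrix (Fin r) (Fin r) ℂ))
    (ψ ψ' : H →* ℂˣ)
    (A A' : Matrix (Fin r × Fin s) (Fin r × Fin s) ℂ)
    (hA : A = ∑ h : H, star ((ψ h : ℂ)) • Q (h : G))
    (hA' : A' = ∑ h : H, star ((ψ' h : ℂ)) • Q (h : G)) :
    (Aᴴ * A = 1 ∧ A * Aᴴ = 1) ∧
      Pg * Aᴴ * A' * Pg = (if ψ = ψ' then (1 : ℂ) else 0) • Pg := by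
  classical
  have hRinv : ∀ g : G, U_R g * U_R g⁻¹ = 1 := fun g => by
    rw [← hR_mul, mul_inv_cancel, hR_one]
  have hSinv : ∀ g : G, U_S g * U_S g⁻¹ = 1 := fun g => by
    rw [← hS_mul, mul_inv_cancel, hS_one]
  have hRconj : ∀ g : G, (U_R g)ᴴ = U_R g⁻¹ := fun g => by
    calc (U_R g)ᴴ = (U_R g)ᴴ * (U_R g * U_R g⁻¹) := by rw [hRinv, mul_one]
    _ = ((U_R g)ᴴ * U_R g) * U_R g⁻¹ := by rw [mul_assoc]
    _ = U_R g⁻¹ := by rw [hR_unitary, one_mul]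
  -- Q is Hermitian
  have hQherm : ∀ g : G, (Q g)ᴴ = Q g := by
    intro g
    rw [hQ]
    ext ⟨i, a⟩ ⟨j, b⟩
    simp only [Matrix.conjTranspose_apply, Matrix.kroneckerMap_apply,
      Matrix.vecMulVec_apply, Matrix.one_apply, Pi.star_apply]
    rw [star_mul']
    by_cases hab : b = a <;> by_cases hba : a = b <;> simp_all [mul_comm]
  -- Q multiplication
  have hQmul : ∀ h k : H, Q (h : G) * Q (k : G) = if h = k then Q (h : G) else 0 := by
    intro h k
    have hdot : (star (φ (h : G))) ⬝ᵥ (φ (k : G)) = if h = k then 1 else 0 := by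
      rw [← horthH h k]; rfl
    rw [hQ, hQ, ← Matrix.mul_kronecker_mul, kvr_vmv_mul_vmv, hdot, one_mul]
    by_cases hhk : h = k
    · simp [hhk, hQ, Matrix.smul_kronecker]
    · simp [hhk, Matrix.smul_kronecker]
  -- product of coefficient sums
  have hmulQ : ∀ c d : H → ℂ,
      (∑ h : H, c h • Q (h : G)) * (∑ h : H, d h • Q (h : G))
        = ∑ h : H, (c h * d h) • Q (h : G) := by
    intro c d
    rw [Finset.sum_mul]
    refine Finset.sum_congr rfl fun h _ => ?_
    rw [Finset.mul_sum]
    have key : ∀ k : H, (c h • Q (h : G)) * (d k • Q (k : G))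
        = if h = k then (c h * d k) • Q (h : G) else 0 := by
      intro k
      rw [smul_mul_assoc, mul_smul_comm, hQmul h k, smul_comm]
      by_cases hhk : h = k <;> simp [hhk, smul_smul, mul_comm]
    simp_rw [key]
    simp
  -- sum of Q over H is 1
  have hQsum : ∑ h : H, Q (h : G) = 1 := by
    have h1 : ∑ h : H, Q (h : G)
        = (∑ h : H, Matrix.vecMulVec (φ (h : G)) (star (φ (h : G)))) ⊗ₖ
          (1 : Matrix (Fin s) (Fin s) ℂ) := by
      rw [kvr_sum_kron]
      exact Finset.sum_congr rfl fun h _ => hQ (h : G)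
    rw [h1, hcompleteH, Matrix.one_kronecker_one]
  have hAH : Aᴴ = ∑ h : H, ((ψ h : ℂ)) • Q (h : G) := by
    rw [hA, Matrix.conjTranspose_sum]
    refine Finset.sum_congr rfl fun h _ => ?_
    rw [Matrix.conjTranspose_smul, star_star, hQherm]
  -- (i) unitarity
  have hAHA : Aᴴ * A = 1 := by
    rw [hAH, hA, hmulQ]
    have h1 : ∀ h : H, (ψ h : ℂ) * star ((ψ h : ℂ)) = 1 := fun h => kvr_unit_mod ψ h
    simp_rw [h1, one_smul]
    exact hQsum
  have hAAH : A * Aᴴ = 1 := by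
    rw [hAH, hA, hmulQ]
    have h1 : ∀ h : H, star ((ψ h : ℂ)) * (ψ h : ℂ) = 1 := fun h => by
      rw [mul_comm]; exact kvr_unit_mod ψ h
    simp_rw [h1, one_smul]
    exact hQsum
  refine ⟨⟨hAHA, hAAH⟩, ?_⟩
  -- the projector absorbs the representation
  have hU : ∀ k : G, (U_R k ⊗ₖ U_S k) * Pg = Pg := by
    intro k
    rw [hPg, Matrix.mul_smul, Finset.mul_sum]
    congr 1
    have h1 : ∀ g : G, (U_R k ⊗ₖ U_S k) * (U_R g ⊗ₖ U_S g) = U_R (k * g) ⊗ₖ U_S (k * g) := by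
      intro g; rw [← Matrix.mul_kronecker_mul, ← hR_mul, ← hS_mul]
    simp_rw [h1]
    exact Fintype.sum_equiv (Equiv.mulLeft k) _ _ (fun g => rfl)
  have hPU : ∀ k : G, Pg * (U_R k ⊗ₖ U_S k) = Pg := by
    intro k
    rw [hPg, Matrix.smul_mul, Finset.sum_mul]
    congr 1
    have h1 : ∀ g : G, (U_R g ⊗ₖ U_S g) * (U_R k ⊗ₖ U_S k) = U_R (g * k) ⊗ₖ U_S (g * k) := by
      intro g; rw [← Matrix.mul_kronecker_mul, ← hR_mul, ← hS_mul]
    simp_rw [h1]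
    exact Fintype.sum_equiv (Equiv.mulRight k) _ _ (fun g => rfl)
  have hPP : Pg * Pg = Pg := by
    nth_rewrite 1 [hPg]
    rw [Matrix.smul_mul, Finset.sum_mul]
    simp_rw [hU]
    rw [Finset.sum_const, Finset.card_univ, ← Nat.cast_smul_eq_nsmul ℂ, smul_smul,
      inv_mul_cancel₀ (Nat.cast_ne_zero.mpr Fintype.card_ne_zero : (Fintype.card G : ℂ) ≠ 0),
      one_smul]
  -- conjugation moves Q around
  have hconjQ : ∀ k g : G, (U_R k ⊗ₖ U_S k) * Q g * (U_R k⁻¹ ⊗ₖ U_S k⁻¹) = Q (k * g) := by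
    intro k g
    have hvm : Matrix.vecMul (star (φ g)) (U_R k⁻¹) = star (φ (k * g)) := by
      rw [← hcov g k, Matrix.star_mulVec, hRconj]
    rw [hQ, hQ, ← Matrix.mul_kronecker_mul, ← Matrix.mul_kronecker_mul,
      kvr_mul_vmv, kvr_vmv_mul, hcov, hvm, mul_one, hSinv]
  have hPQP : ∀ g : G, Pg * Q g * Pg = Pg * Q 1 * Pg := by
    intro g
    have h1 : Q g = (U_R g ⊗ₖ U_S g) * Q 1 * (U_R g⁻¹ ⊗ₖ U_S g⁻¹) := by
      rw [hconjQ g 1, mul_one]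
    rw [h1]
    simp only [Matrix.mul_assoc]
    rw [hU g⁻¹]
    rw [← Matrix.mul_assoc Pg (U_R g ⊗ₖ U_S g), hPU g, ← Matrix.mul_assoc]
  -- (ii) Knill–Laflamme
  by_cases hpp : ψ = ψ'
  · subst hpp
    have hAA' : A' = A := by rw [hA', ← hA]
    rw [hAA', Matrix.mul_assoc Pg Aᴴ A, hAHA, mul_one, hPP, if_pos rfl, one_smul]
  · rw [if_neg hpp, zero_smul]
    have hsum : Aᴴ * A' = ∑ h : H, ((ψ h : ℂ) * star ((ψ' h : ℂ))) • Q (h : G) := by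
      rw [hAH, hA', hmulQ]
    rw [Matrix.mul_assoc Pg Aᴴ A', hsum, Finset.mul_sum, Finset.sum_mul]
    simp_rw [Matrix.mul_smul, Matrix.smul_mul, hPQP]
    rw [← Finset.sum_smul, kvr_char_sum ψ ψ' hpp, zero_smul]
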